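/- Let a = (a_1,…,a_d) with all a_i > 0, let m ∈ ℤ_{≥0} and α^1,…,α^m ∈ ℝ^d∖{0}. Then there exist a triangular sequence λ^{(n)}, n ∈ ℤ^d, and constants δ, L > 0 such that λ^{(n)} satisfies the separation condition Ω_sep[δ] and the close-lattice condition Ω_lat[a,L], and moreover |λ^{(n)}| ≥ δ and |⟨α^j, λ^{(n)}⟩| ≥ δ for all n ∈ ℤ^d and j = 1,…,m. -/

import Mathlib

open scoped NNReal ENNReal
open MeasureTheory

namespace Stmt18Aux

lemma exists_avoid {K : ℕ} (s g : Fin K → ℝ) (s₀ ε δ : ℝ) (hs₀ : 0 < s₀)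
    (hs : ∀ k, s₀ ≤ |s k|) (hδ : 0 < δ) (hKδ : (K : ℝ) * (2 * (δ / s₀)) < ε) :
    ∃ t ∈ Set.Icc (0:ℝ) ε, ∀ k, δ ≤ |s k * t + g k| := by
  set U : Set ℝ := ⋃ k, Metric.ball (-(g k) / s k) (δ / s₀) with hU
  have hsub : ∀ k, {t : ℝ | |s k * t + g k| < δ} ⊆ Metric.ball (-(g k) / s k) (δ / s₀) := by
    intro k t ht
    have hsk : s k ≠ 0 := by
      intro h; have := hs k; rw [h] at this; simp at this; linarith
    simp only [Metric.mem_ball, Real.dist_eq]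
    have h1 : |s k| * |t - -(g k) / s k| = |s k * t + g k| := by
      rw [← abs_mul]; congr 1; field_simp; ring
    have h2 : |s k| * |t - -(g k) / s k| < δ := by rw [h1]; exact ht
    have h3 : s₀ * |t - -(g k) / s k| ≤ |s k| * |t - -(g k) / s k| :=
      mul_le_mul_of_nonneg_right (hs k) (abs_nonneg _)
    have h4 : s₀ * |t - -(g k) / s k| < δ := lt_of_le_of_lt h3 h2
    rw [div_eq_mul_inv δ s₀]
    calc |t - -(g k) / s k| = s₀ * |t - -(g k) / s k| * s₀⁻¹ := by field_simp
    _ < δ * s₀⁻¹ := by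
        apply mul_lt_mul_of_pos_right h4 (inv_pos.mpr hs₀)
  have hvolU : volume U ≤ (K : ℝ≥0∞) * ENNReal.ofReal (2 * (δ / s₀)) := by
    calc volume U ≤ ∑ k : Fin K, volume (Metric.ball (-(g k) / s k) (δ / s₀)) :=
          measure_iUnion_fintype_le _ _
    _ = ∑ k : Fin K, ENNReal.ofReal (2 * (δ / s₀)) := by
        simp [Real.volume_ball]
    _ = (K : ℝ≥0∞) * ENNReal.ofReal (2 * (δ / s₀)) := by
        simp [Finset.sum_const, nsmul_eq_mul]
  have hε : 0 < ε := lt_of_le_of_lt (by positivity) hKδ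
  have hlt : volume U < volume (Set.Icc (0:ℝ) ε) := by
    rw [Real.volume_Icc]
    refine lt_of_le_of_lt hvolU ?_
    rw [show ((K:ℝ≥0∞)) = ENNReal.ofReal (K:ℝ) by simp, ← ENNReal.ofReal_mul (by positivity)]
    exact (ENNReal.ofReal_lt_ofReal_iff (by linarith)).mpr (by linarith)
  have hne : (Set.Icc (0:ℝ) ε \ U).Nonempty := by
    by_contra h
    rw [Set.not_nonempty_iff_eq_empty] at h
    have : volume (Set.Icc (0:ℝ) ε) ≤ volume U := by
      apply measure_mono
      intro x hx
      by_contra hxU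
      exact Set.eq_empty_iff_forall_notMem.mp h x ⟨hx, hxU⟩
    exact absurd this (not_le.mpr hlt)
  obtain ⟨t, htI, htU⟩ := hne
  refine ⟨t, htI, fun k => ?_⟩
  by_contra hc
  push_neg at hc
  exact htU (Set.mem_iUnion.mpr ⟨k, hsub k hc⟩)


open Classical in
noncomputable def pick (ε δ : ℝ) {K : ℕ} (s g : Fin K → ℝ) : ℝ :=
  if h : ∃ t ∈ Set.Icc (0:ℝ) ε, ∀ k, δ ≤ |s k * t + g k| then h.choose else 0

open Classical in
lemma pick_mem {ε δ : ℝ} {K : ℕ} {s g : Fin K → ℝ}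
    (h : ∃ t ∈ Set.Icc (0:ℝ) ε, ∀ k, δ ≤ |s k * t + g k|) :
    pick ε δ s g ∈ Set.Icc (0:ℝ) ε := by
  rw [pick, dif_pos h]; exact h.choose_spec.1

open Classical in
lemma pick_spec {ε δ : ℝ} {K : ℕ} {s g : Fin K → ℝ}
    (h : ∃ t ∈ Set.Icc (0:ℝ) ε, ∀ k, δ ≤ |s k * t + g k|) (k : Fin K) :
    δ ≤ |s k * pick ε δ s g + g k| := by
  rw [pick, dif_pos h]; exact h.choose_spec.2 k

noncomputable def sFun (d m : ℕ) (α : Fin m → EuclideanSpace ℝ (Fin d))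
    (Itop : Fin m → Fin d) (i : Fin d) : Fin (m+1) → ℝ :=
  Fin.lastCases 1 (fun j => if Itop j = i then α j i else 1)

noncomputable def gFun (d m : ℕ) (a : Fin d → ℝ) (α : Fin m → EuclideanSpace ℝ (Fin d))
    (Itop : Fin m → Fin d) (δ : ℝ) (i : Fin d) (n : Fin d → ℤ) (v : Fin d → ℝ) :
    Fin (m+1) → ℝ :=
  Fin.lastCases (if (i:ℕ) = 0 then Real.pi * (n i : ℝ) / a i else 2*δ)
    (fun j => if Itop j = i then α j i * (Real.pi * (n i : ℝ) / a i)
        + ∑ i' ∈ Finset.univ.filter (fun i' : Fin d => (i':ℕ) < (i:ℕ)), α j i' * v i'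
      else 2*δ)

noncomputable def lamAux (d m : ℕ) (a : Fin d → ℝ) (α : Fin m → EuclideanSpace ℝ (Fin d))
    (Itop : Fin m → Fin d) (ε δ : ℝ) : ℕ → (Fin d → ℤ) → Fin d → ℝ
  | 0 => fun _ _ => 0
  | N + 1 => fun n =>
      if h : N < d then
        Function.update (lamAux d m a α Itop ε δ N n) ⟨N, h⟩
          (Real.pi * (n ⟨N, h⟩ : ℝ) / a ⟨N, h⟩ +
            pick ε δ (sFun d m α Itop ⟨N, h⟩)
              (gFun d m a α Itop δ ⟨N, h⟩ n (lamAux d m a α Itop ε δ N n)))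
      else lamAux d m a α Itop ε δ N n


variable {d m : ℕ} {a : Fin d → ℝ} {α : Fin m → EuclideanSpace ℝ (Fin d)}
  {Itop : Fin m → Fin d} {ε δ : ℝ}

lemma gFun_congr {i : Fin d} {n n' : Fin d → ℤ} {v : Fin d → ℝ} (h : n i = n' i) :
    gFun d m a α Itop δ i n v = gFun d m a α Itop δ i n' v := by
  unfold gFun; rw [h]

lemma lamAux_congr : ∀ (N : ℕ) (n n' : Fin d → ℤ),
    (∀ j : Fin d, (j : ℕ) < N → n j = n' j) →
    lamAux d m a α Itop ε δ N n = lamAux d m a α Itop ε δ N n'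
  | 0, n, n', _ => rfl
  | N + 1, n, n', hag => by
    have hIH : lamAux d m a α Itop ε δ N n = lamAux d m a α Itop ε δ N n' :=
      lamAux_congr N n n' (fun j hj => hag j (Nat.lt_succ_of_lt hj))
    by_cases h : N < d
    · have hn : n ⟨N, h⟩ = n' ⟨N, h⟩ := hag _ (Nat.lt_succ_self N)
      simp only [lamAux, dif_pos h, hIH, gFun_congr hn, hn]
    · simp only [lamAux, dif_neg h, hIH]

lemma lamAux_stable : ∀ (N : ℕ) (n : Fin d → ℤ) (i : Fin d), (i : ℕ) < N →
    lamAux d m a α Itop ε δ N n i = lamAux d m a α Itop ε δ ((i : ℕ) + 1) n i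
  | 0, n, i, hi => absurd hi (Nat.not_lt_zero _)
  | N + 1, n, i, hi => by
    rcases Nat.lt_succ_iff_lt_or_eq.mp hi with hi' | hi'
    · have hIH := lamAux_stable N n i hi'
      by_cases h : N < d
      · have hne : i ≠ (⟨N, h⟩ : Fin d) := by
          intro hEq; rw [hEq] at hi'; exact absurd hi' (lt_irrefl _)
        simp only [lamAux, dif_pos h, Function.update_of_ne hne, hIH]
      · simp only [lamAux, dif_neg h, hIH]
    · rw [hi']

lemma lamAux_apply (n : Fin d → ℤ) (i : Fin d) :
    lamAux d m a α Itop ε δ ((i : ℕ) + 1) n i =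
      Real.pi * (n i : ℝ) / a i +
        pick ε δ (sFun d m α Itop i)
          (gFun d m a α Itop δ i n (lamAux d m a α Itop ε δ (i : ℕ) n)) := by
  have h : (i : ℕ) < d := i.isLt
  have hi : (⟨(i : ℕ), h⟩ : Fin d) = i := Fin.ext rfl
  simp only [lamAux, dif_pos h, hi, Function.update_self]

end Stmt18Aux

noncomputable section

lemma abs_coord_le_norm {d : ℕ} (x : EuclideanSpace ℝ (Fin d)) (i : Fin d) : |x i| ≤ ‖x‖ := by
  rw [EuclideanSpace.norm_eq, ← Real.sqrt_sq_eq_abs]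
  apply Real.sqrt_le_sqrt
  have := Finset.single_le_sum (f := fun i' : Fin d => ‖x i'‖^2)
    (fun _ _ => by positivity) (Finset.mem_univ i)
  simpa [Real.norm_eq_abs, sq_abs] using this

namespace Stmt18

/-- A triangular sequence: `λ^{(n)} = (λ₁(n₁), λ₂(n₁,n₂), …, λ_d(n₁,…,n_d))`, the `i`-th
coordinate depending only on `n₁,…,n_i` and increasing in `n_i` for fixed `n₁,…,n_{i−1}`. -/
def IsTriangular {d : ℕ} (lam : (Fin d → ℤ) → EuclideanSpace ℝ (Fin d)) : Prop :=
  (∀ n n' : Fin d → ℤ, ∀ i : Fin d, (∀ j : Fin d, j ≤ i → n j = n' j) → lam n i = lam n' i) ∧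
    (∀ n : Fin d → ℤ, ∀ i : Fin d, ∀ a b : ℤ, a < b →
      lam (Function.update n i a) i < lam (Function.update n i b) i)

/-- The separation condition `Ω_sep[δ]`. -/
def SepCond {d : ℕ} (δ : ℝ) (lam : (Fin d → ℤ) → EuclideanSpace ℝ (Fin d)) : Prop :=
  ∀ n : Fin d → ℤ, ∀ i : Fin d, lam n i + δ ≤ lam (Function.update n i (n i + 1)) i

/-- The close-lattice condition `Ω_lat[a,L]`. -/
def LatCond {d : ℕ} (a : Fin d → ℝ) (L : ℝ) (lam : (Fin d → ℤ) → EuclideanSpace ℝ (Fin d)) :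
    Prop :=
  ∀ n : Fin d → ℤ, ∀ i : Fin d, |lam n i - Real.pi * (n i : ℝ) / a i| ≤ L

/-- for any `a` with `a_i > 0` and any `α^1,…,α^m ∈ ℝ^d ∖ {0}`, there exist a
triangular sequence `λ^{(n)}` and constants `δ, L > 0` satisfying `Ω_sep[δ]`, `Ω_lat[a,L]`, and
`|λ^{(n)}| ≥ δ`, `|⟨α^j, λ^{(n)}⟩| ≥ δ` for all `n ∈ ℤ^d` and `j = 1,…,m`. -/
theorem stmt18 (d m : ℕ) (hd : 0 < d)
    (a : Fin d → ℝ) (ha : ∀ i, 0 < a i)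
    (α : Fin m → EuclideanSpace ℝ (Fin d)) (hα : ∀ j, α j ≠ 0) :
    ∃ (lam : (Fin d → ℤ) → EuclideanSpace ℝ (Fin d)) (δ L : ℝ), 0 < δ ∧ 0 < L ∧
      IsTriangular lam ∧ SepCond δ lam ∧ LatCond a L lam ∧
      (∀ n : Fin d → ℤ, δ ≤ ‖lam n‖) ∧
      (∀ n : Fin d → ℤ, ∀ j : Fin m, δ ≤ |(inner ℝ (α j) (lam n) : ℝ)|) := by
  haveI : Nonempty (Fin d) := ⟨⟨0, hd⟩⟩
  classical
  -- top index of each α j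
  have hαex : ∀ j, ((Finset.univ : Finset (Fin d)).filter (fun i => α j i ≠ 0)).Nonempty := by
    intro j
    obtain ⟨i, hi⟩ := Function.ne_iff.mp (fun h => hα j (WithLp.ofLp_injective 2 h))
    exact ⟨i, Finset.mem_filter.mpr ⟨Finset.mem_univ _, hi⟩⟩
  set Itop : Fin m → Fin d := fun j =>
    (((Finset.univ : Finset (Fin d)).filter (fun i => α j i ≠ 0)).max' (hαex j)) with hItop
  have hItop1 : ∀ j, α j (Itop j) ≠ 0 := fun j =>
    (Finset.mem_filter.mp (Finset.max'_mem _ (hαex j))).2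
  have hItop2 : ∀ j i, Itop j < i → α j i = 0 := by
    intro j i hlt
    by_contra hne
    exact absurd (Finset.le_max' _ i (Finset.mem_filter.mpr ⟨Finset.mem_univ _, hne⟩))
      (not_le.mpr hlt)
  -- constants
  set ε : ℝ := Finset.univ.inf' Finset.univ_nonempty (fun i : Fin d => Real.pi / (2 * a i))
    with hεdef
  have hε : 0 < ε := by
    rw [hεdef, Finset.lt_inf'_iff]
    intro i _
    have := ha i
    positivity
  have hεle : ∀ i : Fin d, ε ≤ Real.pi / (2 * a i) := fun i =>
    Finset.inf'_le _ (Finset.mem_univ i)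
  set s₀ : ℝ := Finset.univ.inf' Finset.univ_nonempty
    (fun k : Fin (m+1) => Fin.lastCases 1 (fun j => |α j (Itop j)|) k) with hs₀def
  have hs₀pos : 0 < s₀ := by
    rw [hs₀def, Finset.lt_inf'_iff]
    intro k _
    refine Fin.lastCases ?_ ?_ k
    · simp
    · intro j
      rw [Fin.lastCases_castSucc]
      exact abs_pos.mpr (hItop1 j)
  have hs₀1 : s₀ ≤ 1 := by
    have := Finset.inf'_le (b := Fin.last m)
      (fun k : Fin (m+1) => Fin.lastCases (motive := fun _ => ℝ) 1 (fun j => |α j (Itop j)|) k) (Finset.mem_univ _)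
    simp only [Fin.lastCases_last] at this
    rw [hs₀def]; exact this
  have hs₀j : ∀ j, s₀ ≤ |α j (Itop j)| := by
    intro j
    have := Finset.inf'_le (b := Fin.castSucc j)
      (fun k : Fin (m+1) => Fin.lastCases (motive := fun _ => ℝ) 1 (fun j => |α j (Itop j)|) k) (Finset.mem_univ _)
    simp only [Fin.lastCases_castSucc] at this
    rw [hs₀def]; exact this
  set δ : ℝ := s₀ * ε / (4 * (m + 1)) with hδdef
  have hδ : 0 < δ := by rw [hδdef]; positivity
  have hδε : δ ≤ ε := by
    rw [hδdef]
    rw [div_le_iff₀ (by positivity)]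
    nlinarith [hε, hs₀pos, hs₀1]
  have hKδ : ((m + 1 : ℕ) : ℝ) * (2 * (δ / s₀)) < ε := by
    have hds : δ / s₀ = ε / (4 * (m + 1)) := by
      rw [hδdef]; field_simp
    rw [hds]
    have hm : (0:ℝ) < (m:ℝ) + 1 := by positivity
    rw [Nat.cast_add, Nat.cast_one]
    rw [div_eq_mul_inv, show (4:ℝ) * ((m:ℝ)+1) = ((m:ℝ)+1) * 4 by ring, mul_inv]
    have : ((m:ℝ) + 1) * (2 * (ε * (((m:ℝ)+1)⁻¹ * 4⁻¹))) = ε / 2 := by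
      field_simp; ring
    rw [this]
    linarith
  -- existence of good t at every step
  have hex : ∀ (i : Fin d) (n : Fin d → ℤ) (v : Fin d → ℝ),
      ∃ t ∈ Set.Icc (0:ℝ) ε, ∀ k : Fin (m+1),
        δ ≤ |Stmt18Aux.sFun d m α Itop i k * t + Stmt18Aux.gFun d m a α Itop δ i n v k| := by
    intro i n v
    apply Stmt18Aux.exists_avoid _ _ s₀ ε δ hs₀pos _ hδ hKδ
    intro k
    refine Fin.lastCases ?_ ?_ k
    · simp [Stmt18Aux.sFun]; linarith
    · intro j
      show s₀ ≤ |Stmt18Aux.sFun d m α Itop i (Fin.castSucc j)|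
      rw [Stmt18Aux.sFun, Fin.lastCases_castSucc]
      by_cases h : Itop j = i
      · rw [if_pos h, ← h]; exact hs₀j j
      · rw [if_neg h]; simp; linarith
  set lam : (Fin d → ℤ) → EuclideanSpace ℝ (Fin d) :=
    fun n => WithLp.toLp 2 (Stmt18Aux.lamAux d m a α Itop ε δ d n) with hlamdef
  set T : (Fin d → ℤ) → Fin d → ℝ := fun n i =>
    Stmt18Aux.pick ε δ (Stmt18Aux.sFun d m α Itop i)
      (Stmt18Aux.gFun d m a α Itop δ i n (Stmt18Aux.lamAux d m a α Itop ε δ (i:ℕ) n))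
    with hTdef
  have hcoord : ∀ (n : Fin d → ℤ) (i : Fin d),
      lam n i = Real.pi * (n i : ℝ) / a i + T n i := by
    intro n i
    show Stmt18Aux.lamAux d m a α Itop ε δ d n i = _
    rw [Stmt18Aux.lamAux_stable d n i i.isLt, Stmt18Aux.lamAux_apply]
  have hT : ∀ (n : Fin d → ℤ) (i : Fin d), T n i ∈ Set.Icc (0:ℝ) ε := fun n i =>
    Stmt18Aux.pick_mem (hex i n _)
  have hC : ∀ (n : Fin d → ℤ) (i : Fin d) (k : Fin (m+1)),
      δ ≤ |Stmt18Aux.sFun d m α Itop i k * T n i +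
        Stmt18Aux.gFun d m a α Itop δ i n (Stmt18Aux.lamAux d m a α Itop ε δ (i:ℕ) n) k| :=
    fun n i k => Stmt18Aux.pick_spec (hex i n _) k
  refine ⟨lam, δ, ε, hδ, hε, ⟨?_, ?_⟩, ?_, ?_, ?_, ?_⟩
  · -- triangular part 1
    intro n n' i hag
    have e1 : lam n i = Stmt18Aux.lamAux d m a α Itop ε δ ((i:ℕ)+1) n i :=
      Stmt18Aux.lamAux_stable d n i i.isLt
    have e2 : lam n' i = Stmt18Aux.lamAux d m a α Itop ε δ ((i:ℕ)+1) n' i :=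
      Stmt18Aux.lamAux_stable d n' i i.isLt
    rw [e1, e2, Stmt18Aux.lamAux_congr ((i:ℕ)+1) n n'
      (fun j hj => hag j (Fin.le_def.mpr (Nat.lt_succ_iff.mp hj)))]
  · -- triangular part 2 (monotone)
    intro n i A B hAB
    have hA := hcoord (Function.update n i A) i
    have hB := hcoord (Function.update n i B) i
    rw [Function.update_self] at hA hB
    rw [hA, hB]
    have hab : (A:ℝ) + 1 ≤ (B:ℝ) := by exact_mod_cast Int.add_one_le_iff.mpr hAB
    have hc2 : 2 * ε ≤ Real.pi / a i := by
      have h2 : ε * (2 * a i) ≤ Real.pi := (le_div_iff₀ (by have := ha i; positivity)).mp (hεle i)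
      rw [le_div_iff₀ (ha i)]; nlinarith
    have e1 : Real.pi * (A:ℝ) / a i = (Real.pi / a i) * (A:ℝ) := by ring
    have e2 : Real.pi * (B:ℝ) / a i = (Real.pi / a i) * (B:ℝ) := by ring
    rw [e1, e2]
    have hcpos : 0 < Real.pi / a i := by have := Real.pi_pos; have := ha i; positivity
    have hmul : (Real.pi / a i) * ((A:ℝ) + 1) ≤ (Real.pi / a i) * (B:ℝ) :=
      mul_le_mul_of_nonneg_left hab (le_of_lt hcpos)
    have hTA := hT (Function.update n i A) i
    have hTB := hT (Function.update n i B) i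
    obtain ⟨hTA0, hTA1⟩ := hTA
    obtain ⟨hTB0, hTB1⟩ := hTB
    nlinarith
  · -- SepCond
    intro n i
    have h1 := hcoord n i
    have h2 := hcoord (Function.update n i (n i + 1)) i
    rw [Function.update_self] at h2
    rw [h1, h2]
    have hcast : ((n i + 1 : ℤ) : ℝ) = (n i : ℝ) + 1 := by push_cast; ring
    rw [hcast]
    have hc2 : 2 * ε ≤ Real.pi / a i := by
      have h2' : ε * (2 * a i) ≤ Real.pi := (le_div_iff₀ (by have := ha i; positivity)).mp (hεle i)
      rw [le_div_iff₀ (ha i)]; nlinarith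
    have e1 : Real.pi * ((n i : ℝ) + 1) / a i = Real.pi * (n i : ℝ) / a i + Real.pi / a i := by
      ring
    rw [e1]
    obtain ⟨hT0, hT1⟩ := hT n i
    obtain ⟨hT0', hT1'⟩ := hT (Function.update n i (n i + 1)) i
    linarith
  · -- LatCond
    intro n i
    rw [hcoord n i]
    have e : Real.pi * (n i : ℝ) / a i + T n i - Real.pi * (n i : ℝ) / a i = T n i := by ring
    rw [e]
    obtain ⟨hT0, hT1⟩ := hT n i
    rw [abs_le]
    constructor <;> linarith
  · -- norm lower bound
    intro n
    set i₀ : Fin d := ⟨0, hd⟩ with hi₀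
    have key := hC n i₀ (Fin.last m)
    rw [Stmt18Aux.sFun, Stmt18Aux.gFun, Fin.lastCases_last, Fin.lastCases_last] at key
    rw [if_pos rfl] at key
    rw [one_mul] at key
    have e : T n i₀ + Real.pi * (n i₀ : ℝ) / a i₀ = lam n i₀ := by rw [hcoord n i₀]; ring
    rw [e] at key
    exact le_trans key (abs_coord_le_norm (lam n) i₀)
  · -- inner lower bound
    intro n j
    have key := hC n (Itop j) (Fin.castSucc j)
    rw [Stmt18Aux.sFun, Stmt18Aux.gFun, Fin.lastCases_castSucc, Fin.lastCases_castSucc,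
      if_pos rfl, if_pos rfl] at key
    have hinner : (inner ℝ (α j) (lam n) : ℝ) = ∑ i, α j i * lam n i := by
      rw [PiLp.inner_apply]
      simp only [RCLike.inner_apply', conj_trivial]
    have hstep1 : ∑ i, α j i * lam n i =
        ∑ i ∈ Finset.univ.filter (fun i : Fin d => (i:ℕ) ≤ ((Itop j : Fin d) : ℕ)),
          α j i * lam n i := by
      symm
      apply Finset.sum_subset (Finset.filter_subset _ _)
      intro i _ hi
      simp only [Finset.mem_filter, Finset.mem_univ, true_and, not_le] at hi
      rw [hItop2 j i (Fin.lt_def.mpr hi), zero_mul]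
    have hnotmem : (Itop j : Fin d) ∉
        Finset.univ.filter (fun i : Fin d => (i:ℕ) < ((Itop j : Fin d) : ℕ)) := by
      simp
    have hsplit : Finset.univ.filter (fun i : Fin d => (i:ℕ) ≤ ((Itop j : Fin d) : ℕ)) =
        insert (Itop j) (Finset.univ.filter (fun i : Fin d => (i:ℕ) < ((Itop j : Fin d) : ℕ))) := by
      ext i
      simp only [Finset.mem_filter, Finset.mem_univ, true_and, Finset.mem_insert, Fin.ext_iff]
      omega
    have hvi : ∀ i' : Fin d, (i':ℕ) < ((Itop j : Fin d) : ℕ) →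
        lam n i' = Stmt18Aux.lamAux d m a α Itop ε δ ((Itop j : Fin d) : ℕ) n i' := by
      intro i' hi'
      have e1 : lam n i' = Stmt18Aux.lamAux d m a α Itop ε δ ((i':ℕ)+1) n i' :=
        Stmt18Aux.lamAux_stable d n i' i'.isLt
      rw [e1, ← Stmt18Aux.lamAux_stable ((Itop j : Fin d) : ℕ) n i' hi']
    have heq : (inner ℝ (α j) (lam n) : ℝ) =
        α j (Itop j) * T n (Itop j) +
          (α j (Itop j) * (Real.pi * (n (Itop j) : ℝ) / a (Itop j)) +
            ∑ i' ∈ Finset.univ.filter (fun i' : Fin d => (i':ℕ) < ((Itop j : Fin d) : ℕ)),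
              α j i' * Stmt18Aux.lamAux d m a α Itop ε δ ((Itop j : Fin d) : ℕ) n i') := by
      rw [hinner, hstep1, hsplit, Finset.sum_insert hnotmem, hcoord n (Itop j)]
      rw [Finset.sum_congr rfl (fun i' hi' => by
        rw [hvi i' (Finset.mem_filter.mp hi').2])]
      ring
    rw [heq]
    exact key


end Stmt18
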